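/- For every partition λ and positive integer k, there is a bijection between BSSYT(λ,k) and the set of triples (Q, j, C′) where Q ∈ RPP(λ,k), 1 ≤ j ≤ k, and C′ is a proper outside corner of the induced subshape α(Q,j). In particular, |BSSYT(λ,k)| = Σ_{Q ∈ RPP(λ,k)} Σ_{j=1}^{k} (number of proper outside corners of α(Q,j)). -/

import Mathlib

open Polynomial

/-- The set of cells of the Young diagram of the partition with parts
`lam 1 ≥ lam 2 ≥ … ≥ lam r`, i.e. pairs `(i,j)` with `1 ≤ i ≤ r` and `1 ≤ j ≤ lam i`. -/
def cells (lam : ℕ → ℕ) (r : ℕ) : Set (ℕ × ℕ) :=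
  {p | 1 ≤ p.1 ∧ p.1 ≤ r ∧ 1 ≤ p.2 ∧ p.2 ≤ lam p.1}

/-- `lam` restricted to indices `1,…,r` is a partition with `r` (positive) parts. -/
def IsPartition (lam : ℕ → ℕ) (r : ℕ) : Prop :=
  (∀ i, 1 ≤ i → i + 1 ≤ r → lam (i + 1) ≤ lam i) ∧ (∀ i, 1 ≤ i → i ≤ r → 1 ≤ lam i)

/-- A partition with `r` rows and `c = lam 1` columns is balanced if every outward corner
of its southeast boundary lies on the main anti-diagonal:
whenever `1 ≤ i < r` and `lam (i+1) < lam i`, one has `lam 1 * (r - i) = r * lam (i+1)`. -/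
def IsBalanced (lam : ℕ → ℕ) (r : ℕ) : Prop :=
  ∀ i, 1 ≤ i → i < r → lam (i + 1) < lam i → lam 1 * (r - i) = r * lam (i + 1)

/-- Flagged semistandard Young tableaux of shape `lam` (with `r` rows):
positive entries, weakly increasing along rows, strictly increasing down columns,
entries in row `i` at most `k + i`; entries outside the diagram are normalized to `0`. -/
def SYT (lam : ℕ → ℕ) (r k : ℕ) : Set ((ℕ × ℕ) → ℕ) :=
  {T | (∀ p, p ∉ cells lam r → T p = 0) ∧
       (∀ p ∈ cells lam r, 1 ≤ T p ∧ T p ≤ k + p.1) ∧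
       (∀ i j, (i, j) ∈ cells lam r → (i, j + 1) ∈ cells lam r → T (i, j) ≤ T (i, j + 1)) ∧
       (∀ i j, (i, j) ∈ cells lam r → (i + 1, j) ∈ cells lam r → T (i, j) < T (i + 1, j))}

/-- Flagged barely set-valued semistandard Young tableaux of shape `lam` (with `r` rows):
finite nonempty sets of positive integers in each cell, exactly one cell receiving a
two-element set and all other cells singletons, weakly increasing along rows
(`A ≤ B` iff every element of `A` is at most every element of `B`) and strictly
increasing down columns, every entry in row `i` at most `k + i`;
cells outside the diagram are normalized to `∅`. -/
def BSSYT (lam : ℕ → ℕ) (r k : ℕ) : Set ((ℕ × ℕ) → Finset ℕ) :=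
  {T | (∀ p, p ∉ cells lam r → T p = ∅) ∧
       (∃ B ∈ cells lam r, (T B).card = 2 ∧ ∀ p ∈ cells lam r, p ≠ B → (T p).card = 1) ∧
       (∀ p ∈ cells lam r, ∀ x ∈ T p, 1 ≤ x ∧ x ≤ k + p.1) ∧
       (∀ i j, (i, j) ∈ cells lam r → (i, j + 1) ∈ cells lam r →
          ∀ x ∈ T (i, j), ∀ y ∈ T (i, j + 1), x ≤ y) ∧
       (∀ i j, (i, j) ∈ cells lam r → (i + 1, j) ∈ cells lam r →
          ∀ x ∈ T (i, j), ∀ y ∈ T (i + 1, j), x < y)}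

/-- Reverse plane partitions of shape `lam` (with `r` rows) with entries in `{0,…,k}`:
weakly increasing along rows and down columns; entries outside the diagram normalized to `0`. -/
def RPP (lam : ℕ → ℕ) (r k : ℕ) : Set ((ℕ × ℕ) → ℕ) :=
  {P | (∀ p, p ∉ cells lam r → P p = 0) ∧
       (∀ p ∈ cells lam r, P p ≤ k) ∧
       (∀ i j, (i, j) ∈ cells lam r → (i, j + 1) ∈ cells lam r → P (i, j) ≤ P (i, j + 1)) ∧
       (∀ i j, (i, j) ∈ cells lam r → (i + 1, j) ∈ cells lam r → P (i, j) ≤ P (i + 1, j))}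

/-- A subshape of `lam`: a down-closed subset of the cells of `lam`
(i.e. a Young diagram contained in `lam`). -/
def IsSubshape (lam : ℕ → ℕ) (r : ℕ) (μ : Set (ℕ × ℕ)) : Prop :=
  μ ⊆ cells lam r ∧
  ∀ p ∈ μ, ∀ q : ℕ × ℕ, 1 ≤ q.1 → q.1 ≤ p.1 → 1 ≤ q.2 → q.2 ≤ p.2 → q ∈ μ

/-- The induced subshape `α(P,i)`: cells of `lam` whose entry in `P` is strictly less than `i`. -/
def alphaShape (lam : ℕ → ℕ) (r : ℕ) (P : (ℕ × ℕ) → ℕ) (i : ℕ) : Set (ℕ × ℕ) :=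
  {p | p ∈ cells lam r ∧ P p < i}

/-- A corner of a subshape `μ`: a cell of `μ` such that the cells immediately below
and to the right are not in `μ`. -/
def IsShapeCorner (μ : Set (ℕ × ℕ)) (p : ℕ × ℕ) : Prop :=
  p ∈ μ ∧ (p.1 + 1, p.2) ∉ μ ∧ (p.1, p.2 + 1) ∉ μ

/-- A proper outside corner of a subshape `μ` of `lam`: a cell of `lam` not in `μ` whose
upper neighbour is in `μ` (or which lies in the first row) and whose left neighbour is
in `μ` (or which lies in the first column). -/
def IsProperOutsideCorner (lam : ℕ → ℕ) (r : ℕ) (μ : Set (ℕ × ℕ)) (p : ℕ × ℕ) : Prop :=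
  p ∈ cells lam r ∧ p ∉ μ ∧
  ((p.1 - 1, p.2) ∈ μ ∨ p.1 = 1) ∧ ((p.1, p.2 - 1) ∈ μ ∨ p.2 = 1)

/-- The jaggedness of a subshape `μ` of `lam`: the number of corners of `μ` plus the
number of proper outside corners of `μ`. -/
noncomputable def jag (lam : ℕ → ℕ) (r : ℕ) (μ : Set (ℕ × ℕ)) : ℕ :=
  {p | IsShapeCorner μ p}.ncard + {p | IsProperOutsideCorner lam r μ p}.ncard

/-- `p` can be toggled into the subshape `μ`. -/
def ToggleIn (lam : ℕ → ℕ) (r : ℕ) (μ : Set (ℕ × ℕ)) (p : ℕ × ℕ) : Prop :=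
  p ∉ μ ∧ IsSubshape lam r (insert p μ)

/-- `p` can be toggled out of the subshape `μ`. -/
def ToggleOut (lam : ℕ → ℕ) (r : ℕ) (μ : Set (ℕ × ℕ)) (p : ℕ × ℕ) : Prop :=
  p ∈ μ ∧ IsSubshape lam r (μ \ {p})

/-- The `j`-th part of the rectangular staircase partition `δ_d(b^a)`,
namely `b * (d - ⌈j/a⌉)`. -/
def deltaSC (a b d : ℕ) : ℕ → ℕ := fun j => b * (d - (j + a - 1) / a)

namespace Aux


lemma mem_cells {lam : ℕ → ℕ} {r : ℕ} {p : ℕ × ℕ} :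
    p ∈ cells lam r ↔ 1 ≤ p.1 ∧ p.1 ≤ r ∧ 1 ≤ p.2 ∧ p.2 ≤ lam p.1 := Iff.rfl

lemma lam_anti {lam : ℕ → ℕ} {r : ℕ} (hpart : IsPartition lam r) :
    ∀ i i', 1 ≤ i → i ≤ i' → i' ≤ r → lam i' ≤ lam i := by
  intro i i' h1 h2 h3
  induction i' with
  | zero => omega
  | succ n ih =>
    rcases Nat.eq_or_lt_of_le h2 with h | h
    · rw [h]
    · exact le_trans (hpart.1 n (by omega) (by omega)) (ih (by omega) (by omega))

lemma cell_up {lam : ℕ → ℕ} {r : ℕ} (hpart : IsPartition lam r) {i j : ℕ}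
    (h : (i + 1, j) ∈ cells lam r) (hi : 1 ≤ i) : (i, j) ∈ cells lam r := by
  obtain ⟨h1, h2, h3, h4⟩ := h
  have h4' : j ≤ lam (i+1) := h4
  refine ⟨hi, by omega, h3, ?_⟩
  show j ≤ lam i
  exact le_trans h4' (lam_anti hpart i (i+1) hi (by omega) h2)

lemma cell_left {lam : ℕ → ℕ} {r : ℕ} {i j : ℕ}
    (h : (i, j + 1) ∈ cells lam r) (hj : 1 ≤ j) : (i, j) ∈ cells lam r := by
  obtain ⟨h1, h2, h3, h4⟩ := h
  have h4' : j + 1 ≤ lam i := h4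
  refine ⟨h1, h2, hj, ?_⟩
  show j ≤ lam i
  omega

lemma sup_id_mem {s : Finset ℕ} (h : s.Nonempty) : s.sup id ∈ s := by
  have := Finset.max'_mem s h
  rwa [Finset.max'_eq_sup', Finset.sup'_eq_sup] at this

lemma cells_finite {lam : ℕ → ℕ} {r : ℕ} : (cells lam r).Finite := by
  apply Set.Finite.subset ((Set.finite_Icc 1 r).prod
    (Set.finite_Icc 1 ((Finset.Icc 1 r).sup lam)))
  rintro ⟨i, j⟩ ⟨h1, h2, h3, h4⟩
  refine ⟨⟨h1, h2⟩, ⟨h3, le_trans h4 ?_⟩⟩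
  exact Finset.le_sup (Finset.mem_Icc.mpr ⟨h1, h2⟩)

end Aux

namespace Aux


/-- the set of admissible triples -/
def Sset (lam : ℕ → ℕ) (r k : ℕ) : Set (((ℕ × ℕ) → ℕ) × ℕ × (ℕ × ℕ)) :=
  {t | t.1 ∈ RPP lam r k ∧ 1 ≤ t.2.1 ∧ t.2.1 ≤ k ∧
    IsProperOutsideCorner lam r (alphaShape lam r t.1 t.2.1) t.2.2}

open Classical in
/-- the map from triples to barely set-valued tableaux -/
noncomputable def gmap (lam : ℕ → ℕ) (r : ℕ) (t : ((ℕ × ℕ) → ℕ) × ℕ × (ℕ × ℕ)) :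
    (ℕ × ℕ) → Finset ℕ :=
  fun p => if p ∈ cells lam r then
    (if p = t.2.2 then {t.2.1 - 1 + t.2.2.1, t.1 t.2.2 + t.2.2.1} else {t.1 p + p.1})
  else ∅

lemma gmap_not_cell {lam : ℕ → ℕ} {r : ℕ} {t} {p : ℕ × ℕ} (h : p ∉ cells lam r) :
    gmap lam r t p = ∅ := by simp [gmap, h]

lemma gmap_corner {lam : ℕ → ℕ} {r : ℕ} {t : ((ℕ × ℕ) → ℕ) × ℕ × (ℕ × ℕ)}
    (h : t.2.2 ∈ cells lam r) :
    gmap lam r t t.2.2 = {t.2.1 - 1 + t.2.2.1, t.1 t.2.2 + t.2.2.1} := by simp [gmap, h]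

lemma gmap_other {lam : ℕ → ℕ} {r : ℕ} {t : ((ℕ × ℕ) → ℕ) × ℕ × (ℕ × ℕ)} {p : ℕ × ℕ}
    (h : p ∈ cells lam r) (hp : p ≠ t.2.2) :
    gmap lam r t p = {t.1 p + p.1} := by simp [gmap, h, hp]

lemma rowmin {lam : ℕ → ℕ} {r k : ℕ} (hpart : IsPartition lam r)
    {T : (ℕ × ℕ) → Finset ℕ} (hT : T ∈ BSSYT lam r k) :
    ∀ i j, (i, j) ∈ cells lam r → ∀ x ∈ T (i, j), i ≤ x := by
  obtain ⟨h0, ⟨B, hB, hB2, hB1⟩, hbd, hrow, hcol⟩ := hT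
  have hne : ∀ p ∈ cells lam r, (T p).Nonempty := by
    intro p hp
    rcases eq_or_ne p B with h | h
    · exact Finset.card_pos.mp (by rw [h, hB2]; omega)
    · exact Finset.card_pos.mp (by rw [hB1 p hp h]; omega)
  intro i
  induction i with
  | zero => intro j hc x hx; omega
  | succ n ih =>
    intro j hc x hx
    have h1 : 1 ≤ x := (hbd (n+1, j) hc x hx).1
    by_cases hn : 1 ≤ n
    · have hc' : (n, j) ∈ cells lam r := cell_up hpart hc hn
      obtain ⟨y, hy⟩ := hne _ hc'
      have h2 := hcol n j hc' hc y hy x hx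
      have h3 := ih j hc' y hy
      omega
    · omega

lemma bssyt_nonempty {lam : ℕ → ℕ} {r k : ℕ} {T : (ℕ × ℕ) → Finset ℕ}
    (hT : T ∈ BSSYT lam r k) : ∀ p ∈ cells lam r, (T p).Nonempty := by
  obtain ⟨h0, ⟨B, hB, hB2, hB1⟩, hbd, hrow, hcol⟩ := hT
  intro p hp
  rcases eq_or_ne p B with h | h
  · exact Finset.card_pos.mp (by rw [h, hB2]; omega)
  · exact Finset.card_pos.mp (by rw [hB1 p hp h]; omega)

end Aux

namespace Aux

lemma gmap_mem {lam : ℕ → ℕ} {r k : ℕ} (hk : 1 ≤ k)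
    {t : ((ℕ × ℕ) → ℕ) × ℕ × (ℕ × ℕ)} (ht : t ∈ Sset lam r k) :
    gmap lam r t ∈ BSSYT lam r k := by
  obtain ⟨Q, j, C⟩ := t
  obtain ⟨⟨hQ0, hQk, hQrow, hQcol⟩, hj1, hjk, hCcell, hCnot, hCup, hCleft⟩ := ht
  simp only at hQ0 hQk hQrow hQcol hj1 hjk hCcell hCnot hCup hCleft ⊢
  have hQC : j ≤ Q C := by
    by_contra h
    exact hCnot ⟨hCcell, by omega⟩
  have hC1 : 1 ≤ C.1 := hCcell.1
  have hC2 : 1 ≤ C.2 := hCcell.2.2.1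
  have gcorner : gmap lam r (Q, j, C) C = {j - 1 + C.1, Q C + C.1} := gmap_corner hCcell
  have gother : ∀ p ∈ cells lam r, p ≠ C → gmap lam r (Q, j, C) p = {Q p + p.1} :=
    fun p hp h => gmap_other hp h
  refine ⟨fun p hp => gmap_not_cell hp, ⟨C, hCcell, ?_, ?_⟩, ?_, ?_, ?_⟩
  · rw [gcorner]
    exact Finset.card_pair (by omega)
  · intro p hp hne
    rw [gother p hp hne]
    simp
  · intro p hp x hx
    rcases eq_or_ne p C with h | h
    · subst h
      rw [gcorner] at hx
      simp only [Finset.mem_insert, Finset.mem_singleton] at hx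
      have := hQk p hp
      rcases hx with h | h <;> omega
    · rw [gother p hp h] at hx
      simp only [Finset.mem_singleton] at hx
      have := hQk p hp
      have := hp.1
      omega
  · -- rows
    intro i j' hc hc' x hx y hy
    have hi1 : 1 ≤ i := hc.1
    have hj'1 : 1 ≤ j' := hc.2.2.1
    have hQr := hQrow i j' hc hc'
    rcases eq_or_ne ((i, j') : ℕ × ℕ) C with hL | hL
    · have hR : ((i, j' + 1) : ℕ × ℕ) ≠ C := by
        intro h
        have := hL.trans h.symm
        simp at this
      rw [hL, gcorner] at hx
      rw [gother _ hc' hR] at hy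
      simp only [Finset.mem_insert, Finset.mem_singleton] at hx hy
      have e1 : Q C = Q (i, j') := by rw [hL]
      have e2 : C.1 = i := by rw [← hL]
      subst hy
      rcases hx with h | h <;> omega
    · rw [gother _ hc hL] at hx
      simp only [Finset.mem_singleton] at hx
      subst hx
      rcases eq_or_ne ((i, j' + 1) : ℕ × ℕ) C with hR | hR
      · rw [hR, gcorner] at hy
        simp only [Finset.mem_insert, Finset.mem_singleton] at hy
        have e1 : Q C = Q (i, j' + 1) := by rw [hR]
        have e2 : C.1 = i := by rw [← hR]
        have hleft : Q (i, j') < j := by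
          rcases hCleft with h | h
          · have e3 : ((C.1, C.2 - 1) : ℕ × ℕ) = (i, j') := by rw [← hR]; simp
            rw [e3] at h
            exact h.2
          · have : C.2 = j' + 1 := by rw [← hR]
            omega
        rcases hy with h | h <;> omega
      · rw [gother _ hc' hR] at hy
        simp only [Finset.mem_singleton] at hy
        omega
  · -- columns
    intro i j' hc hc' x hx y hy
    have hi1 : 1 ≤ i := hc.1
    have hQc := hQcol i j' hc hc'
    rcases eq_or_ne ((i, j') : ℕ × ℕ) C with hL | hL
    · have hR : ((i + 1, j') : ℕ × ℕ) ≠ C := by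
        intro h
        have := hL.trans h.symm
        simp at this
      rw [hL, gcorner] at hx
      rw [gother _ hc' hR] at hy
      simp only [Finset.mem_insert, Finset.mem_singleton] at hx hy
      have e1 : Q C = Q (i, j') := by rw [hL]
      have e2 : C.1 = i := by rw [← hL]
      subst hy
      rcases hx with h | h <;> omega
    · rw [gother _ hc hL] at hx
      simp only [Finset.mem_singleton] at hx
      subst hx
      rcases eq_or_ne ((i + 1, j') : ℕ × ℕ) C with hR | hR
      · rw [hR, gcorner] at hy
        simp only [Finset.mem_insert, Finset.mem_singleton] at hy
        have e1 : Q C = Q (i + 1, j') := by rw [hR]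
        have e2 : C.1 = i + 1 := by rw [← hR]
        have hup : Q (i, j') < j := by
          rcases hCup with h | h
          · have e3 : ((C.1 - 1, C.2) : ℕ × ℕ) = (i, j') := by rw [← hR]; simp
            rw [e3] at h
            exact h.2
          · omega
        rcases hy with h | h <;> omega
      · rw [gother _ hc' hR] at hy
        simp only [Finset.mem_singleton] at hy
        omega

end Aux

namespace Aux

lemma gmap_inj {lam : ℕ → ℕ} {r k : ℕ} : Set.InjOn (gmap lam r) (Sset lam r k) := by
  rintro ⟨Q, j, C⟩ ht ⟨Q', j', C'⟩ ht' heq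
  obtain ⟨⟨hQ0, hQk, hQrow, hQcol⟩, hj1, hjk, hCcell, hCnot, hCup, hCleft⟩ := ht
  obtain ⟨⟨hQ0', hQk', hQrow', hQcol'⟩, hj1', hjk', hCcell', hCnot', hCup', hCleft'⟩ := ht'
  simp only at hQ0 hQk hj1 hjk hCcell hCnot hQ0' hQk' hj1' hjk' hCcell' hCnot'
  have hQC : j ≤ Q C := by
    by_contra h; exact hCnot ⟨hCcell, by omega⟩
  have hQC' : j' ≤ Q' C' := by
    by_contra h; exact hCnot' ⟨hCcell', by omega⟩
  have hC1 : 1 ≤ C.1 := hCcell.1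
  have hC1' : 1 ≤ C'.1 := hCcell'.1
  have gcorner : gmap lam r (Q, j, C) C = {j - 1 + C.1, Q C + C.1} := gmap_corner hCcell
  have gcorner' : gmap lam r (Q', j', C') C' = {j' - 1 + C'.1, Q' C' + C'.1} :=
    gmap_corner hCcell'
  have hCC : C = C' := by
    by_contra hne
    have h1 : gmap lam r (Q, j, C) C = gmap lam r (Q', j', C') C := congrFun heq C
    rw [gcorner, gmap_other hCcell hne] at h1
    have h2 := congrArg Finset.card h1
    rw [Finset.card_pair (by omega), Finset.card_singleton] at h2
    omega
  subst hCC
  have hpair : ({j - 1 + C.1, Q C + C.1} : Finset ℕ) = {j' - 1 + C.1, Q' C + C.1} := by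
    rw [← gcorner, ← gcorner', heq]
  have hjj : j = j' ∧ Q C = Q' C := by
    have m1 : j - 1 + C.1 ∈ ({j' - 1 + C.1, Q' C + C.1} : Finset ℕ) := by
      rw [← hpair]; simp
    have m2 : Q C + C.1 ∈ ({j' - 1 + C.1, Q' C + C.1} : Finset ℕ) := by
      rw [← hpair]; simp
    have m3 : j' - 1 + C.1 ∈ ({j - 1 + C.1, Q C + C.1} : Finset ℕ) := by
      rw [hpair]; simp
    have m4 : Q' C + C.1 ∈ ({j - 1 + C.1, Q C + C.1} : Finset ℕ) := by
      rw [hpair]; simp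
    simp only [Finset.mem_insert, Finset.mem_singleton] at m1 m2 m3 m4
    omega
  have hQQ : Q = Q' := by
    funext p
    by_cases hp : p ∈ cells lam r
    · rcases eq_or_ne p C with h | h
      · rw [h]; exact hjj.2
      · have h1 : gmap lam r (Q, j, C) p = gmap lam r (Q', j', C) p := congrFun heq p
        rw [gmap_other hp h, gmap_other hp h] at h1
        have h2 : Q p + p.1 = Q' p + p.1 := Finset.singleton_injective h1
        omega
    · rw [hQ0 p hp, hQ0' p hp]
  rw [hQQ, hjj.1]

end Aux

namespace Aux

lemma gmap_surj {lam : ℕ → ℕ} {r k : ℕ} (hpart : IsPartition lam r)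
    {T : (ℕ × ℕ) → Finset ℕ} (hT : T ∈ BSSYT lam r k) :
    ∃ t ∈ Sset lam r k, gmap lam r t = T := by
  classical
  have hT' := hT
  obtain ⟨h0, ⟨B, hB, hB2, hB1⟩, hbd, hrow, hcol⟩ := hT'
  have hne : ∀ p ∈ cells lam r, (T p).Nonempty := bssyt_nonempty hT
  have hmin := rowmin hpart hT
  -- the two entries of the doubled cell
  obtain ⟨x, y, hxy, hTBxy⟩ := Finset.card_eq_two.mp hB2
  have hex : ∃ a b, a < b ∧ T B = {a, b} := by
    rcases lt_or_gt_of_ne hxy with h | h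
    · exact ⟨x, y, h, hTBxy⟩
    · exact ⟨y, x, h, by rw [hTBxy, Finset.pair_comm]⟩
  obtain ⟨a, b, hab, hTB⟩ := hex
  have haB : a ∈ T B := by rw [hTB]; simp
  have hbB : b ∈ T B := by rw [hTB]; simp
  -- the max function and the RPP
  set M : (ℕ × ℕ) → ℕ := fun p => if h : (T p).Nonempty then (T p).max' h else 0 with hM
  have hMmem : ∀ p ∈ cells lam r, M p ∈ T p := by
    intro p hp
    rw [hM]
    simp only [dif_pos (hne p hp)]
    exact Finset.max'_mem _ _
  have hMle : ∀ p ∈ cells lam r, ∀ z ∈ T p, z ≤ M p := by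
    intro p hp z hz
    rw [hM]
    simp only [dif_pos (hne p hp)]
    exact Finset.le_max' _ _ hz
  have hM0 : ∀ p, p ∉ cells lam r → M p = 0 := by
    intro p hp
    rw [hM]
    simp [h0 p hp]
  have hMge : ∀ p ∈ cells lam r, p.1 ≤ M p := fun p hp =>
    hmin p.1 p.2 hp (M p) (hMmem p hp)
  set Q : (ℕ × ℕ) → ℕ := fun p => M p - p.1 with hQ
  have hMB : M B = b := by
    refine le_antisymm ?_ (hMle B hB b hbB)
    have := hMmem B hB
    rw [hTB] at this
    simp only [Finset.mem_insert, Finset.mem_singleton] at this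
    rcases this with h | h <;> omega
  have hB1ge : 1 ≤ B.1 := hB.1
  have hB2ge : 1 ≤ B.2 := hB.2.2.1
  have hage : B.1 ≤ a := hmin B.1 B.2 hB a haB
  have hble : b ≤ k + B.1 := (hbd B hB b hbB).2
  set j0 : ℕ := a - B.1 + 1 with hj0
  have hQRPP : Q ∈ RPP lam r k := by
    refine ⟨fun p hp => by simp [hQ, hM0 p hp], ?_, ?_, ?_⟩
    · intro p hp
      have := (hbd p hp (M p) (hMmem p hp)).2
      simp only [hQ]
      omega
    · intro i j hc hc'
      have h1 := hrow i j hc hc' (M (i, j)) (hMmem _ hc) (M (i, j + 1)) (hMmem _ hc')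
      simp only [hQ]
      omega
    · intro i j hc hc'
      have h1 := hcol i j hc hc' (M (i, j)) (hMmem _ hc) (M (i + 1, j)) (hMmem _ hc')
      have h2 := hMge _ hc
      simp only [hQ]
      omega
  have hQB : Q B = b - B.1 := by simp only [hQ, hMB]
  refine ⟨(Q, j0, B), ⟨hQRPP, by show 1 ≤ j0; omega, by show j0 ≤ k; omega, hB, ?_, ?_, ?_⟩, ?_⟩
  · -- B not in alpha
    intro hmem
    have : Q B < j0 := hmem.2
    omega
  · -- up neighbour
    rcases eq_or_ne B.1 1 with h | h
    · exact Or.inr h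
    · left
      have e : ((B.1 - 1 + 1, B.2) : ℕ × ℕ) = B := by
        rw [show B.1 - 1 + 1 = B.1 by omega]
      have hupcell : ((B.1 - 1, B.2) : ℕ × ℕ) ∈ cells lam r :=
        cell_up hpart (by rw [e]; exact hB) (by omega)
      have hcolB := hcol (B.1 - 1) B.2 hupcell (by rw [e]; exact hB)
      rw [e] at hcolB
      have h1 := hcolB (M (B.1 - 1, B.2)) (hMmem _ hupcell) a haB
      have h2 := hMge _ hupcell
      refine ⟨hupcell, ?_⟩
      show Q (B.1 - 1, B.2) < j0
      simp only [hQ]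
      omega
  · -- left neighbour
    rcases eq_or_ne B.2 1 with h | h
    · exact Or.inr h
    · left
      have e : ((B.1, B.2 - 1 + 1) : ℕ × ℕ) = B := by
        rw [show B.2 - 1 + 1 = B.2 by omega]
      have hleftcell : ((B.1, B.2 - 1) : ℕ × ℕ) ∈ cells lam r :=
        cell_left (by rw [e]; exact hB) (by omega)
      have hrowB := hrow B.1 (B.2 - 1) hleftcell (by rw [e]; exact hB)
      rw [e] at hrowB
      have h1 := hrowB (M (B.1, B.2 - 1)) (hMmem _ hleftcell) a haB
      have h2 := hMge _ hleftcell
      refine ⟨hleftcell, ?_⟩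
      show Q (B.1, B.2 - 1) < j0
      simp only [hQ]
      omega
  · -- gmap (Q, j0, B) = T
    funext p
    by_cases hp : p ∈ cells lam r
    · rcases eq_or_ne p B with h | h
      · subst h
        have hg : gmap lam r (Q, j0, p) p = {j0 - 1 + p.1, Q p + p.1} := gmap_corner hp
        rw [hg, hTB]
        rw [show j0 - 1 + p.1 = a by omega, show Q p + p.1 = b by omega]
      · have hg : gmap lam r (Q, j0, B) p = {Q p + p.1} := gmap_other hp h
        obtain ⟨e, he⟩ := Finset.card_eq_one.mp (hB1 p hp h)
        have hMp : M p = e := by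
          have := hMmem p hp
          rwa [he, Finset.mem_singleton] at this
        rw [hg, he, show Q p + p.1 = e by have := hMge p hp; simp only [hQ]; omega]
    · rw [gmap_not_cell hp, h0 p hp]

end Aux

namespace Aux

lemma RPP_finite {lam : ℕ → ℕ} {r k : ℕ} : (RPP lam r k).Finite := by
  classical
  have hc : (cells lam r).Finite := cells_finite
  let e : (hc.toFinset → Fin (k + 1)) → ((ℕ × ℕ) → ℕ) :=
    fun f p => if h : p ∈ hc.toFinset then (f ⟨p, h⟩ : ℕ) else 0
  apply Set.Finite.subset (Set.finite_range e)
  intro P hP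
  refine ⟨fun q => ⟨P q.1, Nat.lt_succ_of_le (hP.2.1 q.1 ?_)⟩, ?_⟩
  · exact hc.mem_toFinset.mp q.2
  · funext p
    by_cases h : p ∈ hc.toFinset
    · simp only [e, dif_pos h]
    · simp only [e, dif_neg h]
      exact (hP.1 p (fun hmem => h (hc.mem_toFinset.mpr hmem))).symm

lemma Sset_finite {lam : ℕ → ℕ} {r k : ℕ} : (Sset lam r k).Finite := by
  apply Set.Finite.subset (RPP_finite.prod ((Set.finite_Icc 1 k).prod cells_finite))
  rintro ⟨Q, j, C⟩ ⟨hQ, hj1, hjk, hC⟩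
  exact ⟨hQ, ⟨hj1, hjk⟩, hC.1⟩

end Aux

/-- Theorem 3.3: `BSSYT(λ,k)` is in bijection with triples `(Q, j, C')`
where `Q ∈ RPP(λ,k)`, `1 ≤ j ≤ k`, and `C'` is a proper outside corner of `α(Q,j)`;
in particular `|BSSYT(λ,k)| = Σ_{Q ∈ RPP(λ,k)} Σ_{j=1}^k #{proper outside corners of α(Q,j)}`. -/
theorem bssyt_outside_corner_representation (lam : ℕ → ℕ) (r k : ℕ)
    (hpart : IsPartition lam r) (hk : 1 ≤ k) :
    Nonempty ((BSSYT lam r k) ≃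
      {t : ((ℕ × ℕ) → ℕ) × ℕ × (ℕ × ℕ) //
        t.1 ∈ RPP lam r k ∧ 1 ≤ t.2.1 ∧ t.2.1 ≤ k ∧
        IsProperOutsideCorner lam r (alphaShape lam r t.1 t.2.1) t.2.2}) ∧
    (BSSYT lam r k).ncard =
      ∑ᶠ Q ∈ RPP lam r k, ∑ j ∈ Finset.Icc 1 k,
        {p | IsProperOutsideCorner lam r (alphaShape lam r Q j) p}.ncard := by

  classical
  have hbij : Function.Bijective
      (fun t : ↥(Aux.Sset lam r k) =>
        (⟨Aux.gmap lam r t.1, Aux.gmap_mem hk t.2⟩ : ↥(BSSYT lam r k))) := by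
    constructor
    · rintro ⟨t, ht⟩ ⟨t', ht'⟩ h
      exact Subtype.ext (Aux.gmap_inj ht ht' (congrArg Subtype.val h))
    · rintro ⟨T, hT⟩
      obtain ⟨t, ht, hgt⟩ := Aux.gmap_surj hpart hT
      exact ⟨⟨t, ht⟩, Subtype.ext hgt⟩
  let E := Equiv.ofBijective _ hbij
  refine ⟨⟨E.symm.trans (Equiv.subtypeEquivRight fun t => Iff.rfl)⟩, ?_⟩
  -- cardinality
  have h1 : (BSSYT lam r k).ncard = (Aux.Sset lam r k).ncard := by
    rw [← Nat.card_coe_set_eq, ← Nat.card_coe_set_eq]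
    exact (Nat.card_congr E).symm
  have hcellsfin : (cells lam r).Finite := Aux.cells_finite
  have hRPPfin : (RPP lam r k).Finite := Aux.RPP_finite
  set cellsF := hcellsfin.toFinset with hcellsF
  set RPPF := hRPPfin.toFinset with hRPPF
  set cornF : ((ℕ × ℕ) → ℕ) → ℕ → Finset (ℕ × ℕ) :=
    fun Q j => cellsF.filter (fun p => IsProperOutsideCorner lam r (alphaShape lam r Q j) p)
    with hcornF
  have hcorn : ∀ Q j, {p | IsProperOutsideCorner lam r (alphaShape lam r Q j) p}
      = ↑(cornF Q j) := by
    intro Q j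
    ext p
    simp only [Set.mem_setOf_eq, hcornF, Finset.coe_filter, hcellsF,
      Set.Finite.mem_toFinset]
    exact ⟨fun h => ⟨h.1, h⟩, fun h => h.2⟩
  set SF : Finset (((ℕ × ℕ) → ℕ) × ℕ × (ℕ × ℕ)) :=
    RPPF.biUnion (fun Q => (Finset.Icc 1 k).biUnion
      (fun j => (cornF Q j).image (fun p => (Q, j, p)))) with hSFdef
  have hSF : Aux.Sset lam r k = ↑SF := by
    ext t
    simp only [hSFdef, Finset.coe_biUnion, Set.mem_iUnion, Finset.mem_coe,
      Finset.mem_image, Finset.mem_biUnion]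
    constructor
    · rintro ⟨hQ, hj1, hjk, hC⟩
      refine ⟨t.1, hRPPfin.mem_toFinset.mpr hQ, t.2.1, Finset.mem_Icc.mpr ⟨hj1, hjk⟩,
        t.2.2, ?_, rfl⟩
      simp only [hcornF, Finset.mem_filter, hcellsF, Set.Finite.mem_toFinset]
      exact ⟨hC.1, hC⟩
    · rintro ⟨Q, hQ, j, hj, p, hp, rfl⟩
      simp only [hcornF, Finset.mem_filter] at hp
      exact ⟨hRPPfin.mem_toFinset.mp hQ, (Finset.mem_Icc.mp hj).1,
        (Finset.mem_Icc.mp hj).2, hp.2⟩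
  have hinj : ∀ Q j, Function.Injective (fun p : ℕ × ℕ => ((Q, j, p) :
      ((ℕ × ℕ) → ℕ) × ℕ × (ℕ × ℕ))) := by
    intro Q j p p' h
    simpa using h
  have hcard : SF.card = ∑ Q ∈ RPPF, ∑ j ∈ Finset.Icc 1 k, (cornF Q j).card := by
    rw [hSFdef, Finset.card_biUnion]
    · refine Finset.sum_congr rfl fun Q _ => ?_
      rw [Finset.card_biUnion]
      · exact Finset.sum_congr rfl fun j _ =>
          Finset.card_image_of_injective _ (hinj Q j)
      · intro j hj j' hj' hne
        rw [Function.onFun, Finset.disjoint_left]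
        rintro a ha ha'
        simp only [Finset.mem_image] at ha ha'
        obtain ⟨p, _, rfl⟩ := ha
        obtain ⟨p', _, he⟩ := ha'
        exact hne (congrArg (fun z => z.2.1) he).symm
    · intro Q hQ Q' hQ' hne
      rw [Function.onFun, Finset.disjoint_left]
      rintro a ha ha'
      simp only [Finset.mem_biUnion, Finset.mem_image] at ha ha'
      obtain ⟨j, _, p, _, rfl⟩ := ha
      obtain ⟨j', _, p', _, he⟩ := ha'
      exact hne (congrArg (fun z => z.1) he).symm
  calc (BSSYT lam r k).ncard = (Aux.Sset lam r k).ncard := h1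
    _ = SF.card := by rw [hSF, Set.ncard_coe_finset]
    _ = ∑ Q ∈ RPPF, ∑ j ∈ Finset.Icc 1 k, (cornF Q j).card := hcard
    _ = ∑ Q ∈ RPPF, ∑ j ∈ Finset.Icc 1 k,
          {p | IsProperOutsideCorner lam r (alphaShape lam r Q j) p}.ncard := by
        refine Finset.sum_congr rfl fun Q _ => Finset.sum_congr rfl fun j _ => ?_
        rw [hcorn Q j, Set.ncard_coe_finset]
    _ = ∑ᶠ Q ∈ RPP lam r k, ∑ j ∈ Finset.Icc 1 k,
          {p | IsProperOutsideCorner lam r (alphaShape lam r Q j) p}.ncard := by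
        rw [← finsum_mem_coe_finset, hRPPF, hRPPfin.coe_toFinset]
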